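/- Existence of an optimal conductivity: assume b lies in the range of E. Then there exists μ* ∈ ℝ^m with μ*_e ≥ 0 for all e such that ℒ(μ*) is finite and ℒ(μ*) ≤ ℒ(μ) for every μ ∈ ℝ^m with nonnegative entries; i.e., the functional ℒ attains its minimum over the nonnegative orthant ℝ₊^m. -/

import Mathlib

open Matrix BigOperators


private lemma exists_min_flow {n m : ℕ} (E : Matrix (Fin n) (Fin m) ℝ) (w : Fin m → ℝ)
    (hw : ∀ e, 0 < w e) (b : Fin n → ℝ) (q₀ : Fin m → ℝ) (hq₀ : E.mulVec q₀ = b) :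
    ∃ qs, E.mulVec qs = b ∧ ∀ q, E.mulVec q = b →
      ∑ e, w e * |qs e| ≤ ∑ e, w e * |q e| := by
  classical
  set f : (Fin m → ℝ) → ℝ := fun q => ∑ e, w e * |q e| with hf
  have hfc : Continuous f := by
    apply continuous_finset_sum
    exact fun e _ => continuous_const.mul (continuous_apply e).abs
  have hEc : Continuous fun q : Fin m → ℝ => E.mulVec q :=
    (Matrix.mulVecLin E).continuous_of_finiteDimensional
  set S : Set (Fin m → ℝ) := {q | E.mulVec q = b} with hS
  have hScl : IsClosed S := isClosed_eq hEc continuous_const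
  set K : Set (Fin m → ℝ) := S ∩ {q | f q ≤ f q₀} with hK
  have hfq₀ : 0 ≤ f q₀ :=
    Finset.sum_nonneg fun e _ => mul_nonneg (hw e).le (abs_nonneg _)
  set R : ℝ := ∑ e, f q₀ / w e with hR
  have hRnn : 0 ≤ R := Finset.sum_nonneg fun e _ => div_nonneg hfq₀ (hw e).le
  have hKc : IsCompact K := by
    rw [Metric.isCompact_iff_isClosed_bounded]
    constructor
    · exact hScl.inter (isClosed_le hfc continuous_const)
    · apply (Metric.isBounded_closedBall (x := (0 : Fin m → ℝ)) (r := R)).subset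
      intro q hq
      rw [Metric.mem_closedBall, dist_zero_right]
      rw [pi_norm_le_iff_of_nonneg hRnn]
      intro e
      rw [Real.norm_eq_abs]
      have h1 : w e * |q e| ≤ f q := by
        apply Finset.single_le_sum (f := fun e => w e * |q e|)
          (fun i _ => mul_nonneg (hw i).le (abs_nonneg _)) (Finset.mem_univ e)
      have h2 : f q ≤ f q₀ := hq.2
      have h3 : |q e| ≤ f q₀ / w e := by
        rw [le_div_iff₀ (hw e)]
        calc |q e| * w e = w e * |q e| := mul_comm _ _
          _ ≤ f q₀ := h1.trans h2
      refine h3.trans ?_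
      exact Finset.single_le_sum (f := fun e => f q₀ / w e)
        (fun i _ => div_nonneg hfq₀ (hw i).le) (Finset.mem_univ e)
  have hKne : K.Nonempty := ⟨q₀, hq₀, Set.mem_setOf.mpr le_rfl⟩
  obtain ⟨qs, hqsK, hmin⟩ := hKc.exists_isMinOn hKne hfc.continuousOn
  refine ⟨qs, hqsK.1, fun q hq => ?_⟩
  by_cases h : f q ≤ f q₀
  · exact hmin ⟨hq, Set.mem_setOf.mpr h⟩
  · exact (hmin ⟨hq₀, Set.mem_setOf.mpr le_rfl⟩).trans (not_le.1 h).le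

private lemma amgm_aux (a t c : ℝ) (ha : 0 ≤ a) (hc : 0 < c) :
    a * |t| ≤ 1/2 * (a * t^2 / c) + 1/2 * (c * a) := by
  have h2 : 1/2 * (a * t^2 / c) + 1/2 * (c * a) = (a * t^2 + c^2 * a) / (2*c) := by
    field_simp
  rw [h2, le_div_iff₀ (by positivity)]
  nlinarith [mul_nonneg ha (sq_nonneg (|t| - c)), sq_abs t]

/-- Existence of an optimal conductivity: if `b` lies in the range of `E`, then the
functional `ℒ(μ) = ℰ(μ) + ½ wᵀμ` attains a finite minimum over the nonnegative orthant.
Here `G = W⁻¹Eᵀ`, `L[μ] = E Diag(μ) G` and `ℰ(μ) = sup_u (bᵀu − ½ uᵀ L[μ] u)` is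
valued in `ℝ ∪ {+∞}`, modelled by `EReal`. -/
theorem optimal_conductivity_exists {n m : ℕ} (hn : 0 < n) (hm : 0 < m)
    (E : Matrix (Fin n) (Fin m) ℝ) (w : Fin m → ℝ) (hw : ∀ e, 0 < w e)
    (b : Fin n → ℝ)
    (G : Matrix (Fin m) (Fin n) ℝ) (hG : G = (Matrix.diagonal w)⁻¹ * Eᵀ)
    (L : (Fin m → ℝ) → Matrix (Fin n) (Fin n) ℝ)
    (hL : ∀ μ, L μ = E * Matrix.diagonal μ * G)
    (Lyap : (Fin m → ℝ) → EReal)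
    (hLyap : ∀ μ, Lyap μ =
      (⨆ u : Fin n → ℝ, ((b ⬝ᵥ u - (1/2) * (u ⬝ᵥ (L μ).mulVec u) : ℝ) : EReal))
        + (((1/2) * (w ⬝ᵥ μ) : ℝ) : EReal))
    (hb : ∃ q₀ : Fin m → ℝ, E.mulVec q₀ = b) :
    ∃ μs : Fin m → ℝ, (∀ e, 0 ≤ μs e) ∧ Lyap μs ≠ ⊤ ∧ Lyap μs ≠ ⊥ ∧
      ∀ μ : Fin m → ℝ, (∀ e, 0 ≤ μ e) → Lyap μs ≤ Lyap μ := by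
  classical
  obtain ⟨q₀, hq₀⟩ := hb
  -- matrix identities
  have hWinv : (Matrix.diagonal w)⁻¹ = Matrix.diagonal (fun e => (w e)⁻¹) := by
    apply Matrix.inv_eq_right_inv
    rw [Matrix.diagonal_mul_diagonal]
    have : (fun i => w i * (w i)⁻¹) = fun _ : Fin m => (1:ℝ) :=
      funext fun e => mul_inv_cancel₀ (hw e).ne'
    rw [this, Matrix.diagonal_one]
  have hLmv : ∀ μ u, (L μ).mulVec u =
      E.mulVec (fun e => μ e * ((w e)⁻¹ * Eᵀ.mulVec u e)) := by
    intro μ u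
    rw [hL, hG, hWinv, ← Matrix.mulVec_mulVec, ← Matrix.mulVec_mulVec, ← Matrix.mulVec_mulVec]
    exact congrArg E.mulVec (funext fun e => by
      rw [Matrix.mulVec_diagonal, Matrix.mulVec_diagonal])
  have hquad : ∀ μ u, u ⬝ᵥ (L μ).mulVec u =
      ∑ e, μ e * (Eᵀ.mulVec u e)^2 / w e := by
    intro μ u
    rw [hLmv, Matrix.dotProduct_mulVec, ← Matrix.mulVec_transpose]
    rw [dotProduct]
    apply Finset.sum_congr rfl
    intro e _
    field_simp
  have hsym : ∀ μ j i, (L μ) i j = (L μ) j i := by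
    intro μ j i
    rw [hL, hG, hWinv]
    simp [Matrix.mul_apply, Matrix.diagonal_apply, Finset.sum_ite_eq, Finset.mul_sum,
      Finset.sum_ite_eq']
    apply Finset.sum_congr rfl
    intro e _
    ring
  -- dot product with b through E
  have hbdot : ∀ u, b ⬝ᵥ u = ∑ e, q₀ e * Eᵀ.mulVec u e := by
    intro u
    rw [← hq₀, dotProduct_comm, Matrix.dotProduct_mulVec, ← Matrix.mulVec_transpose,
      dotProduct_comm]
    rfl
  -- minimizing flow
  obtain ⟨qs, hqs, hqsmin⟩ := exists_min_flow E w hw b q₀ hq₀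
  set F : ℝ := ∑ e, w e * |qs e| with hF
  have hbdots : ∀ u, b ⬝ᵥ u = ∑ e, qs e * Eᵀ.mulVec u e := by
    intro u
    rw [← hqs, dotProduct_comm, Matrix.dotProduct_mulVec, ← Matrix.mulVec_transpose,
      dotProduct_comm]
    rfl
  set μs : Fin m → ℝ := fun e => |qs e| with hμs
  have hμsnn : ∀ e, 0 ≤ μs e := fun e => abs_nonneg _
  have hwμs : w ⬝ᵥ μs = F := by rw [dotProduct, hF]
  -- upper bound: Lyap μs ≤ F
  have upper : Lyap μs ≤ ((F : ℝ) : EReal) := by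
    rw [hLyap]
    have h1 : (⨆ u : Fin n → ℝ,
        ((b ⬝ᵥ u - (1/2) * (u ⬝ᵥ (L μs).mulVec u) : ℝ) : EReal)) ≤
        (((1/2) * F : ℝ) : EReal) := by
      apply iSup_le
      intro u
      rw [EReal.coe_le_coe_iff]
      rw [hquad, hbdots]
      have hterm : ∀ e, qs e * Eᵀ.mulVec u e ≤
          (1/2) * (μs e * (Eᵀ.mulVec u e)^2 / w e) + (1/2) * (w e * |qs e|) := by
        intro e
        have hqt : qs e * Eᵀ.mulVec u e ≤ |qs e| * |Eᵀ.mulVec u e| :=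
          (le_abs_self _).trans (abs_mul _ _).le
        have := amgm_aux (|qs e|) (Eᵀ.mulVec u e) (w e) (abs_nonneg _) (hw e)
        have hμse : μs e = |qs e| := rfl
        rw [hμse]
        calc qs e * Eᵀ.mulVec u e ≤ |qs e| * |Eᵀ.mulVec u e| := hqt
          _ ≤ 1/2 * (|qs e| * (Eᵀ.mulVec u e)^2 / w e) + 1/2 * (w e * |qs e|) := this
      have hsum := Finset.sum_le_sum fun e (_ : e ∈ Finset.univ) => hterm e
      rw [Finset.sum_add_distrib, ← Finset.mul_sum, ← Finset.mul_sum] at hsum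
      rw [hF]
      linarith [hsum]
    calc (⨆ u : Fin n → ℝ,
        ((b ⬝ᵥ u - (1/2) * (u ⬝ᵥ (L μs).mulVec u) : ℝ) : EReal))
        + (((1/2) * (w ⬝ᵥ μs) : ℝ) : EReal)
        ≤ (((1/2) * F : ℝ) : EReal) + (((1/2) * F : ℝ) : EReal) := by
          apply add_le_add h1
          rw [hwμs]
      _ = ((F : ℝ) : EReal) := by
          rw [← EReal.coe_add]
          congr 1
          ring
  -- lower bound: for all μ ≥ 0, (F : EReal) ≤ Lyap μ
  have lower : ∀ μ : Fin m → ℝ, (∀ e, 0 ≤ μ e) → ((F : ℝ) : EReal) ≤ Lyap μ := by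
    intro μ hμ
    rw [hLyap]
    by_cases hrange : ∃ u, (L μ).mulVec u = b
    · obtain ⟨u₀, hu₀⟩ := hrange
      set v : Fin m → ℝ := Eᵀ.mulVec u₀ with hv
      set q : Fin m → ℝ := fun e => μ e * ((w e)⁻¹ * v e) with hq
      have hEq : E.mulVec q = b := by rw [← hu₀, hLmv]
      have h1 : b ⬝ᵥ u₀ = ∑ e, μ e * (v e)^2 / w e := by
        rw [← hquad μ u₀, hu₀, dotProduct_comm]
      have hval : b ⬝ᵥ u₀ - (1/2) * (u₀ ⬝ᵥ (L μ).mulVec u₀) =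
          (1/2) * ∑ e, μ e * (v e)^2 / w e := by
        rw [hquad, h1]
        ring
      have hterm : ∀ e, w e * |q e| ≤
          (1/2) * (μ e * (v e)^2 / w e) + (1/2) * (w e * μ e) := by
        intro e
        have hwc := hw e
        have habs : w e * |q e| = μ e * |v e| := by
          have hqe : q e = μ e * ((w e)⁻¹ * v e) := rfl
          rw [hqe, abs_mul, abs_mul, abs_of_nonneg (hμ e), abs_of_pos (inv_pos.2 hwc)]
          field_simp
        rw [habs]
        exact (amgm_aux (μ e) (v e) (w e) (hμ e) hwc).trans (le_of_eq (by ring))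
      have hreal : F ≤ (b ⬝ᵥ u₀ - (1/2) * (u₀ ⬝ᵥ (L μ).mulVec u₀)) + (1/2) * (w ⬝ᵥ μ) := by
        have hFq : F ≤ ∑ e, w e * |q e| := hqsmin q hEq
        have hsum : (∑ e, w e * |q e|) ≤
            (1/2) * (∑ e, μ e * (v e)^2 / w e) + (1/2) * (w ⬝ᵥ μ) := by
          rw [dotProduct, Finset.mul_sum, Finset.mul_sum, ← Finset.sum_add_distrib]
          exact Finset.sum_le_sum fun e _ => hterm e
        rw [hval]
        linarith
      calc ((F : ℝ) : EReal)
          ≤ (((b ⬝ᵥ u₀ - (1/2) * (u₀ ⬝ᵥ (L μ).mulVec u₀)) : ℝ) : EReal)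
            + (((1/2) * (w ⬝ᵥ μ) : ℝ) : EReal) := by
            rw [← EReal.coe_add, EReal.coe_le_coe_iff]
            exact hreal
        _ ≤ _ := by
            refine add_le_add ?_ le_rfl
            exact le_iSup (fun u : Fin n → ℝ =>
              ((b ⬝ᵥ u - (1/2) * (u ⬝ᵥ (L μ).mulVec u) : ℝ) : EReal)) u₀
    · -- b not in range of L μ : sup is ⊤
      have hnotmem : b ∉ LinearMap.range (Matrix.mulVecLin (L μ)) := by
        intro hmem
        obtain ⟨u, hu⟩ := hmem
        exact hrange ⟨u, hu⟩
      obtain ⟨φ, hφb, hφ0⟩ :=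
        Submodule.exists_dual_map_eq_bot_of_notMem hnotmem inferInstance
      have hφ0' : ∀ x, φ ((L μ).mulVec x) = 0 := by
        intro x
        have hmem : (L μ).mulVec x ∈ LinearMap.range (Matrix.mulVecLin (L μ)) :=
          ⟨x, rfl⟩
        have h3 : φ ((L μ).mulVec x) ∈ Submodule.map φ
            (LinearMap.range (Matrix.mulVecLin (L μ))) := Submodule.mem_map_of_mem hmem
        rw [hφ0, Submodule.mem_bot] at h3
        exact h3
      set z : Fin n → ℝ := fun i => φ (fun j => if i = j then 1 else 0) with hz
      have hφeq : ∀ y : Fin n → ℝ, φ y = ∑ i, y i * z i := by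
        intro y
        rw [LinearMap.pi_apply_eq_sum_univ φ y]
        simp [hz, smul_eq_mul]
      have hLz : (L μ).mulVec z = 0 := by
        funext j
        have h1 : φ ((L μ).mulVec (fun k => if j = k then 1 else 0)) = 0 := hφ0' _
        rw [hφeq] at h1
        have h2 : ∀ i, ((L μ).mulVec (fun k => if j = k then 1 else 0)) i = (L μ) i j := by
          intro i
          rw [Matrix.mulVec]
          simp [dotProduct]
        rw [Finset.sum_congr rfl (fun i _ => by rw [h2 i])] at h1
        show ((L μ).mulVec z) j = 0
        rw [Matrix.mulVec]
        rw [show ((L μ) j ⬝ᵥ z) = ∑ i, (L μ) j i * z i from rfl]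
        rw [← h1]
        exact Finset.sum_congr rfl fun i _ => by rw [hsym μ j i]
      have hbz : b ⬝ᵥ z ≠ 0 := by
        rw [dotProduct, ← hφeq]
        exact hφb
      have htop : (⨆ u : Fin n → ℝ,
          ((b ⬝ᵥ u - (1/2) * (u ⬝ᵥ (L μ).mulVec u) : ℝ) : EReal)) = ⊤ := by
        rw [iSup_eq_top]
        intro c hc
        have hval : ∀ t : ℝ, (b ⬝ᵥ (t • z) - (1/2) * ((t • z) ⬝ᵥ (L μ).mulVec (t • z)) : ℝ)
            = t * (b ⬝ᵥ z) := by
          intro t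
          rw [Matrix.mulVec_smul, hLz, smul_zero, dotProduct_zero, dotProduct_smul]
          simp [smul_eq_mul]
        induction c using EReal.rec with
        | bot =>
          exact ⟨0, EReal.bot_lt_coe _⟩
        | coe c =>
          refine ⟨((c+1)/(b ⬝ᵥ z)) • z, ?_⟩
          rw [hval, div_mul_cancel₀ _ hbz]
          exact_mod_cast (lt_add_one c)
        | top => exact absurd hc (lt_irrefl _)
      rw [htop, EReal.top_add_coe]
      exact le_top
  -- conclude
  refine ⟨μs, hμsnn, ?_, ?_, ?_⟩
  · intro h
    rw [h] at upper
    exact (EReal.coe_lt_top F).not_ge upper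
  · intro h
    have := lower μs hμsnn
    rw [h] at this
    exact (not_le.2 (EReal.bot_lt_coe F)) this
  · intro μ hμ
    exact upper.trans (lower μ hμ)
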